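/- Let W ∈ ℂ[x₁,…,xₙ] be a direct sum of atomic types: W = W₁ + ⋯ + W_k, where the W_m are polynomials in pairwise disjoint sets of variables covering all of x₁,…,xₙ, and each W_m is of one of the forms (with all exponents integers ≥ 2, in the variables of its block): fermat x^a; loop x₁^{a₁}x₂ + x₂^{a₂}x₃ + ⋯ + x_r^{a_r}x₁; or chain x₁^{a₁}x₂ + x₂^{a₂}x₃ + ⋯ + x_{r-1}^{a_{r-1}}x_r + x_r^{a_r}. Then the origin is the only point of ℂⁿ at which all n partial derivatives ∂W/∂x₁, …, ∂W/∂xₙ vanish simultaneously. -/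

import Mathlib

open scoped BigOperators
open MvPolynomial

/-- An atomic block of an invertible polynomial: a loop
`x₁^{a₁}x₂ + x₂^{a₂}x₃ + ⋯ + x_r^{a_r}x₁` (with `r ≥ 2`) or a chain
`x₁^{a₁}x₂ + x₂^{a₂}x₃ + ⋯ + x_{r-1}^{a_{r-1}}x_r + x_r^{a_r}` (with `r ≥ 1`; for `r = 1`
this is a fermat monomial `x^a`), on the variables `v 0, …, v (r-1)` with exponents
`a 0, …, a (r-1)`, all at least `2`. -/
structure AtomicBlock (n : ℕ) where
  r : ℕ
  isLoop : Bool
  hr : 1 ≤ r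
  hloop : isLoop = true → 2 ≤ r
  v : Fin r → Fin n
  a : Fin r → ℕ
  ha : ∀ k, 2 ≤ a k

/-- The polynomial of an atomic block. -/
noncomputable def blockPoly {n : ℕ} (B : AtomicBlock n) : MvPolynomial (Fin n) ℂ :=
  if B.isLoop then
    ∑ k : Fin B.r, X (B.v k) ^ B.a k * X (B.v ⟨((k : ℕ) + 1) % B.r, Nat.mod_lt _ B.hr⟩)
  else
    ∑ k : Fin B.r, X (B.v k) ^ B.a k *
      (if h : (k : ℕ) + 1 < B.r then X (B.v ⟨(k : ℕ) + 1, h⟩) else 1)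


lemma chain_zero (r : ℕ) (a : ℕ → ℕ) (ha : ∀ k, k < r → 2 ≤ a k)
    (y : ℕ → ℂ)
    (heq : ∀ k, k < r → (a k : ℂ) * y k ^ (a k - 1) * (if k + 1 < r then y (k+1) else 1)
      + (if 0 < k then y (k-1) ^ a (k-1) else 0) = 0) :
    ∀ k, k < r → y k = 0 := by
  have hstep1 : ∀ k, k < r → y k ^ a k * (if k + 1 < r then y (k+1) else 1) = 0 := by
    intro k
    induction k with
    | zero =>
      intro hk
      have h := heq 0 hk
      simp only [if_neg (lt_irrefl 0), add_zero] at h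
      have ha0 : (a 0 : ℂ) ≠ 0 := Nat.cast_ne_zero.2 (by have := ha 0 hk; omega)
      set c : ℂ := if 0 + 1 < r then y 1 else 1 with hc
      have h2 : y 0 ^ (a 0 - 1) * c = 0 := by
        rcases mul_eq_zero.1 (show (a 0 : ℂ) * (y 0 ^ (a 0 - 1) * c) = 0 by
            linear_combination h) with h' | h'
        · exact absurd h' ha0
        · exact h'
      have hp : y 0 ^ a 0 = y 0 ^ (a 0 - 1) * y 0 := by
        rw [← pow_succ]; congr 1; have := ha 0 hk; omega
      rw [hp]
      linear_combination y 0 * h2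
    | succ k ih =>
      intro hk
      have hik := ih (by omega)
      rw [if_pos (by omega : k + 1 < r)] at hik
      have h := heq (k+1) hk
      rw [if_pos (Nat.succ_pos k)] at h
      simp only [Nat.add_sub_cancel] at h
      have hak : (a (k+1) : ℂ) ≠ 0 := Nat.cast_ne_zero.2 (by have := ha (k+1) hk; omega)
      set c : ℂ := if k + 1 + 1 < r then y (k+1+1) else 1 with hc
      have h2 : y (k+1) ^ (a (k+1) - 1) * c * y (k+1) = 0 := by
        rcases mul_eq_zero.1 (show (a (k+1) : ℂ) *
            (y (k+1) ^ (a (k+1) - 1) * c * y (k+1)) = 0 by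
            linear_combination y (k+1) * h - hik) with h' | h'
        · exact absurd h' hak
        · exact h'
      have hp : y (k+1) ^ a (k+1) = y (k+1) ^ (a (k+1) - 1) * y (k+1) := by
        rw [← pow_succ]; congr 1; have := ha (k+1) hk; omega
      rw [hp]
      linear_combination h2
  have hlast : ∀ k, k < r → k + 1 = r → y k = 0 := by
    intro k hk hk1
    have h := hstep1 k hk
    rw [if_neg (by omega), mul_one] at h
    exact pow_eq_zero_iff (by have := ha k hk; omega : a k ≠ 0) |>.1 h
  have hback : ∀ k, k + 1 < r → y (k+1) = 0 → y k = 0 := by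
    intro k hk hk1
    have h := heq (k+1) hk
    rw [if_pos (Nat.succ_pos k)] at h
    simp only [Nat.add_sub_cancel] at h
    rw [hk1, zero_pow (by have := ha (k+1) hk; omega : a (k+1) - 1 ≠ 0)] at h
    simp only [mul_zero, zero_mul, zero_add] at h
    exact pow_eq_zero_iff (by have := ha k (by omega); omega : a k ≠ 0) |>.1 h
  have hdown : ∀ d k, k < r → k + d + 1 = r → y k = 0 := by
    intro d
    induction d with
    | zero => intro k hk h; exact hlast k hk (by omega)
    | succ d ih =>
      intro k hk h
      exact hback k (by omega) (ih (k+1) (by omega) (by omega))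
  intro k hk
  exact hdown (r - k - 1) k hk (by omega)


lemma loop_zero (r : ℕ) (hr : 2 ≤ r) (a : ℕ → ℕ) (ha : ∀ k, k < r → 2 ≤ a k) (y : ℕ → ℂ)
    (heq : ∀ k, k < r → (a k : ℂ) * y k ^ (a k - 1) * y ((k+1) % r)
      + y ((k + r - 1) % r) ^ a ((k + r - 1) % r) = 0) :
    ∀ k, k < r → y k = 0 := by
  have hr0 : 0 < r := by omega
  have hpred_lt : ∀ k : ℕ, (k + r - 1) % r < r := fun k => Nat.mod_lt _ hr0
  have hsucc_pred : ∀ k, k < r → ((k + r - 1) % r + 1) % r = k := by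
    intro k hk
    rw [Nat.mod_add_mod, show k + r - 1 + 1 = k + r by omega, Nat.add_mod_right,
      Nat.mod_eq_of_lt hk]
  have hzero_prop : ∀ k, k < r → y k = 0 → y ((k + r - 1) % r) = 0 := by
    intro k hk h0
    have h := heq k hk
    rw [h0, zero_pow (by have := ha k hk; omega : a k - 1 ≠ 0)] at h
    simp only [mul_zero, zero_mul, zero_add] at h
    exact pow_eq_zero_iff (by have := ha _ (hpred_lt k); omega : a ((k+r-1)%r) ≠ 0) |>.1 h
  -- existence of a zero
  have hex : ∃ k, k < r ∧ y k = 0 := by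
    by_contra hcon
    push_neg at hcon
    set f : ℕ → ℝ := fun k => ‖y k ^ a k * y ((k+1) % r)‖ with hf
    have hfpos : ∀ k, k < r → 0 < f k := by
      intro k hk
      apply norm_pos_iff.2
      exact mul_ne_zero (pow_ne_zero _ (hcon k hk)) (hcon _ (Nat.mod_lt _ hr0))
    have hrel : ∀ k, k < r → f ((k + r - 1) % r) = (a k : ℝ) * f k := by
      intro k hk
      have h := heq k hk
      have hQ : ((a k : ℂ)) * (y k ^ a k * y ((k+1) % r)) =
          -(y ((k + r - 1) % r) ^ a ((k + r - 1) % r) * y (((k + r - 1) % r + 1) % r)) := by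
        rw [hsucc_pred k hk]
        have hp : y k ^ a k = y k ^ (a k - 1) * y k := by
          rw [← pow_succ]; congr 1; have := ha k hk; omega
        rw [hp]
        linear_combination y k * h
      have := congrArg Norm.norm hQ
      rw [norm_mul, norm_neg] at this
      simp only [Complex.norm_natCast] at this
      rw [hf]
      simp only
      rw [this]
    have hlt : ∀ k, k < r → f k < f ((k + r - 1) % r) := by
      intro k hk
      rw [hrel k hk]
      have h2 : (2 : ℝ) ≤ (a k : ℝ) := by exact_mod_cast ha k hk
      nlinarith [hfpos k hk]
    have hle : ∀ k, k < r → f k ≤ f 0 := by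
      intro k
      induction k with
      | zero => intro _; exact le_refl _
      | succ k ih =>
        intro hk
        have h1 := hlt (k+1) hk
        rw [show k + 1 + r - 1 = k + r by omega, Nat.add_mod_right,
          Nat.mod_eq_of_lt (by omega : k < r)] at h1
        exact le_of_lt (lt_of_lt_of_le h1 (ih (by omega)))
    have h0 := hlt 0 hr0
    rw [show 0 + r - 1 = r - 1 by omega, Nat.mod_eq_of_lt (by omega : r - 1 < r)] at h0
    exact absurd (hle (r-1) (by omega)) (not_le.2 h0)
  obtain ⟨k0, hk0, hy0⟩ := hex
  have hiter : ∀ d, y ((k0 + d * (r-1)) % r) = 0 := by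
    intro d
    induction d with
    | zero => simpa [Nat.mod_eq_of_lt hk0] using hy0
    | succ d ih =>
      have hu := hzero_prop _ (Nat.mod_lt _ hr0) ih
      have harg : ((k0 + d * (r-1)) % r + r - 1) % r = (k0 + (d+1) * (r-1)) % r := by
        rw [show (k0 + d * (r-1)) % r + r - 1 = (k0 + d * (r-1)) % r + (r - 1) by omega,
          Nat.mod_add_mod]
        congr 1
        rw [Nat.succ_mul]
        ring
      rwa [harg] at hu
  intro j hj
  have key := hiter (k0 + r - j)
  have hd1 : (k0 + r - j) * (r-1) + (k0 + r - j) = (k0 + r - j) * r := by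
    rw [← Nat.mul_succ]; congr 1; omega
  have hd2 : (k0 + r - j - 1) * r + r = (k0 + r - j) * r := by
    rw [← Nat.succ_mul]; congr 1; omega
  have hident : k0 + (k0 + r - j) * (r-1) = j + (k0 + r - j - 1) * r := by omega
  rwa [hident, Nat.add_mul_mod_self_right, Nat.mod_eq_of_lt hj] at key

lemma eval_pderiv_aux {n : ℕ} (i u w : Fin n) (a : ℕ) (z : Fin n → ℂ) :
    eval z (pderiv i (X u ^ a * X w : MvPolynomial (Fin n) ℂ)) =
      (if u = i then (a : ℂ) * z u ^ (a - 1) * z w else 0) +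
      (if w = i then z u ^ a else 0) := by
  rw [pderiv_mul, pderiv_pow, pderiv_X, pderiv_X]
  by_cases hu : u = i <;> by_cases hw : w = i <;>
    simp [hu, hw, Pi.single_apply, mul_comm]

lemma eval_pderiv_aux2 {n : ℕ} (i u : Fin n) (a : ℕ) (z : Fin n → ℂ) :
    eval z (pderiv i (X u ^ a : MvPolynomial (Fin n) ℂ)) =
      (if u = i then (a : ℂ) * z u ^ (a - 1) else 0) := by
  rw [pderiv_pow, pderiv_X]
  by_cases hu : u = i <;> simp [hu, Pi.single_apply]

lemma succ_mod_iff {r j k : ℕ} (hj : j < r) (hk : k < r) :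
    (j + 1) % r = k ↔ j = (k + r - 1) % r := by
  have hr0 : 0 < r := by omega
  have hsp : ((k + r - 1) % r + 1) % r = k := by
    rw [Nat.mod_add_mod, show k + r - 1 + 1 = k + r by omega, Nat.add_mod_right,
      Nat.mod_eq_of_lt hk]
  constructor
  · intro h
    have he : (j + 1) % r = ((k + r - 1) % r + 1) % r := by rw [h, hsp]
    have hm : j ≡ (k + r - 1) % r [MOD r] := Nat.ModEq.add_right_cancel' 1 he
    rwa [Nat.ModEq, Nat.mod_eq_of_lt hj, Nat.mod_eq_of_lt (Nat.mod_lt _ hr0)] at hm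
  · intro h; rw [h, hsp]

lemma eval_pderiv_block_ne {n : ℕ} (B : AtomicBlock n) (i : Fin n)
    (hne : ∀ k, B.v k ≠ i) (z : Fin n → ℂ) :
    eval z (pderiv i (blockPoly B)) = 0 := by
  rw [blockPoly]
  split_ifs with hB
  · rw [map_sum, map_sum]
    apply Finset.sum_eq_zero
    intro j _
    rw [eval_pderiv_aux]
    rw [if_neg (hne j), if_neg (hne _), add_zero]
  · rw [map_sum, map_sum]
    apply Finset.sum_eq_zero
    intro j _
    by_cases h : (j : ℕ) + 1 < B.r
    · rw [dif_pos h, eval_pderiv_aux, if_neg (hne j), if_neg (hne _), add_zero]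
    · rw [dif_neg h, mul_one, eval_pderiv_aux2, if_neg (hne j)]

lemma eval_pderiv_block_loop {n : ℕ} (B : AtomicBlock n) (hB : B.isLoop = true)
    (hinj : Function.Injective B.v) (z : Fin n → ℂ) (k : Fin B.r) :
    eval z (pderiv (B.v k) (blockPoly B)) =
      (B.a k : ℂ) * z (B.v k) ^ (B.a k - 1) *
        z (B.v ⟨((k : ℕ) + 1) % B.r, Nat.mod_lt _ B.hr⟩)
      + z (B.v ⟨((k : ℕ) + B.r - 1) % B.r, Nat.mod_lt _ B.hr⟩) ^
          B.a ⟨((k : ℕ) + B.r - 1) % B.r, Nat.mod_lt _ B.hr⟩ := by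
  set km1 : Fin B.r := ⟨((k : ℕ) + B.r - 1) % B.r, Nat.mod_lt _ B.hr⟩ with hkm1
  rw [blockPoly, if_pos hB, map_sum, map_sum]
  rw [Finset.sum_congr rfl (fun j _ => eval_pderiv_aux (B.v k) (B.v j)
    (B.v ⟨((j : ℕ) + 1) % B.r, Nat.mod_lt _ B.hr⟩) (B.a j) z)]
  rw [Finset.sum_add_distrib]
  congr 1
  · rw [Finset.sum_congr rfl (fun j _ =>
      if_congr hinj.eq_iff rfl rfl)]
    simp
  · rw [Finset.sum_congr rfl (fun (j : Fin B.r) _ =>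
      if_congr (show (B.v ⟨((j : ℕ) + 1) % B.r, Nat.mod_lt _ B.hr⟩ = B.v k) ↔ (j = km1) by
          rw [hinj.eq_iff]
          constructor
          · intro hh; exact Fin.ext ((succ_mod_iff j.isLt k.isLt).1 (congrArg Fin.val hh))
          · intro hh; exact Fin.ext ((succ_mod_iff j.isLt k.isLt).2 (congrArg Fin.val hh))) rfl rfl)]
    simp

lemma eval_pderiv_block_chain {n : ℕ} (B : AtomicBlock n) (hB : B.isLoop = false)
    (hinj : Function.Injective B.v) (z : Fin n → ℂ) (k : Fin B.r) :
    eval z (pderiv (B.v k) (blockPoly B)) =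
      (B.a k : ℂ) * z (B.v k) ^ (B.a k - 1) *
        (if h : (k : ℕ) + 1 < B.r then z (B.v ⟨(k : ℕ) + 1, h⟩) else 1)
      + (if h : 0 < (k : ℕ) then
          z (B.v ⟨(k : ℕ) - 1, Nat.lt_of_le_of_lt (Nat.sub_le _ _) k.isLt⟩) ^
            B.a ⟨(k : ℕ) - 1, Nat.lt_of_le_of_lt (Nat.sub_le _ _) k.isLt⟩ else 0) := by
  rw [blockPoly, if_neg (by simp [hB]), map_sum, map_sum]
  have hterm : ∀ j : Fin B.r,
      eval z (pderiv (B.v k) (X (B.v j) ^ B.a j *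
        (if h : (j : ℕ) + 1 < B.r then X (B.v ⟨(j : ℕ) + 1, h⟩) else 1))) =
      (if j = k then (B.a j : ℂ) * z (B.v j) ^ (B.a j - 1) *
        (if h : (j : ℕ) + 1 < B.r then z (B.v ⟨(j : ℕ) + 1, h⟩) else 1) else 0)
      + (if hj1 : (j : ℕ) + 1 < B.r then
          (if (j : ℕ) + 1 = (k : ℕ) then z (B.v j) ^ B.a j else 0) else 0) := by
    intro j
    by_cases h : (j : ℕ) + 1 < B.r
    · rw [dif_pos h, dif_pos h, dif_pos h, eval_pderiv_aux]
      congr 1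
      · exact if_congr hinj.eq_iff rfl rfl
      · exact if_congr (by rw [hinj.eq_iff, Fin.ext_iff]) rfl rfl
    · rw [dif_neg h, dif_neg h, dif_neg h, mul_one, eval_pderiv_aux2, add_zero]
      by_cases hjk : j = k
      · subst hjk; rw [if_pos rfl, if_pos rfl, mul_one]
      · rw [if_neg (fun hc => hjk (hinj hc)), if_neg hjk]
  rw [Finset.sum_congr rfl (fun j _ => hterm j), Finset.sum_add_distrib]
  congr 1
  · simp
  · by_cases hk0 : 0 < (k : ℕ)
    · rw [dif_pos hk0]
      set km1 : Fin B.r := ⟨(k : ℕ) - 1, Nat.lt_of_le_of_lt (Nat.sub_le _ _) k.isLt⟩ with hkm1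
      rw [Finset.sum_congr rfl (fun j _ => show _ = (if j = km1 then z (B.v j) ^ B.a j else 0) by
        by_cases hj : j = km1
        · subst hj
          rw [if_pos rfl, dif_pos (by simp [hkm1]; omega), if_pos (by simp [hkm1]; omega)]
        · rw [if_neg hj]
          by_cases h1 : (j : ℕ) + 1 < B.r
          · rw [dif_pos h1, if_neg (by
              intro hc
              exact hj (Fin.ext (by simp [hkm1]; omega)))]
          · rw [dif_neg h1])]
      simp [hkm1]
    · rw [dif_neg hk0]
      apply Finset.sum_eq_zero
      intro j _
      by_cases h1 : (j : ℕ) + 1 < B.r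
      · rw [dif_pos h1, if_neg (by omega)]
      · rw [dif_neg h1]

/-- if `W = W₁ + ⋯ + W_m` is a direct sum of atomic types (fermat, loop,
chain, all exponents at least 2) in pairwise disjoint sets of variables covering all of
`x₁, …, xₙ`, then the origin is the only point of `ℂⁿ` at which all `n` partial
derivatives of `W` vanish simultaneously. -/
theorem atomic_sum_nondegenerate (n m : ℕ) (Bl : Fin m → AtomicBlock n)
    (hbij : Function.Bijective
      (fun p : (Σ t : Fin m, Fin (Bl t).r) => (Bl p.1).v p.2))
    (W : MvPolynomial (Fin n) ℂ) (hW : W = ∑ t, blockPoly (Bl t)) :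
    (∀ i : Fin n, MvPolynomial.eval (0 : Fin n → ℂ) (MvPolynomial.pderiv i W) = 0) ∧
    (∀ z : Fin n → ℂ,
      (∀ i : Fin n, MvPolynomial.eval z (MvPolynomial.pderiv i W) = 0) → z = 0) := by
  obtain ⟨hinj, hsurj⟩ := hbij
  have hblockinj : ∀ t : Fin m, Function.Injective (Bl t).v := by
    intro t x y hxy
    have h := hinj (a₁ := ⟨t, x⟩) (a₂ := ⟨t, y⟩) hxy
    exact eq_of_heq (Sigma.mk.inj_iff.mp h).2
  have hcross : ∀ (t : Fin m) (k : Fin (Bl t).r) (s : Fin m), s ≠ t →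
      ∀ k' : Fin (Bl s).r, (Bl s).v k' ≠ (Bl t).v k := by
    intro t k s hst k' hc
    exact hst (congrArg Sigma.fst (hinj (a₁ := ⟨s, k'⟩) (a₂ := ⟨t, k⟩) hc))
  have key : ∀ (z : Fin n → ℂ) (t : Fin m) (k : Fin (Bl t).r),
      MvPolynomial.eval z (MvPolynomial.pderiv ((Bl t).v k) W) =
      MvPolynomial.eval z (MvPolynomial.pderiv ((Bl t).v k) (blockPoly (Bl t))) := by
    intro z t k
    rw [hW, map_sum, map_sum]
    rw [Finset.sum_eq_single t]
    · intro s _ hst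
      exact eval_pderiv_block_ne _ _ (fun k' => hcross t k s hst k') z
    · intro h; exact absurd (Finset.mem_univ t) h
  have hane : ∀ (t : Fin m) (j : Fin (Bl t).r), (Bl t).a j ≠ 0 := by
    intro t j; have := (Bl t).ha j; omega
  have hane1 : ∀ (t : Fin m) (j : Fin (Bl t).r), (Bl t).a j - 1 ≠ 0 := by
    intro t j; have := (Bl t).ha j; omega
  constructor
  · intro i
    obtain ⟨⟨t, k⟩, rfl⟩ := hsurj i
    rw [key]
    cases hL : (Bl t).isLoop with
    | true =>
      rw [eval_pderiv_block_loop _ hL (hblockinj t)]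
      simp only [Pi.zero_apply]
      rw [zero_pow (hane1 t k), mul_zero, zero_add]
      exact zero_pow (hane t _)
    | false =>
      rw [eval_pderiv_block_chain _ hL (hblockinj t)]
      simp only [Pi.zero_apply]
      rw [zero_pow (hane1 t k), mul_zero, zero_mul, zero_add]
      split_ifs with h
      · exact zero_pow (hane t _)
      · rfl
  · intro z hz
    have hall : ∀ (t : Fin m) (k : Fin (Bl t).r), z ((Bl t).v k) = 0 := by
      intro t k
      set yN : ℕ → ℂ := fun j => if h : j < (Bl t).r then z ((Bl t).v ⟨j, h⟩) else 0 with hyN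
      set aN : ℕ → ℕ := fun j => if h : j < (Bl t).r then (Bl t).a ⟨j, h⟩ else 2 with haN
      have haN2 : ∀ j, j < (Bl t).r → 2 ≤ aN j := by
        intro j hj
        rw [haN]; simp only [dif_pos hj]; exact (Bl t).ha _
      have hya : ∀ (j : ℕ) (hj : j < (Bl t).r), yN j = z ((Bl t).v ⟨j, hj⟩) := by
        intro j hj; rw [hyN]; simp only [dif_pos hj]
      have haa : ∀ (j : ℕ) (hj : j < (Bl t).r), aN j = (Bl t).a ⟨j, hj⟩ := by
        intro j hj; rw [haN]; simp only [dif_pos hj]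
      suffices h : ∀ j, j < (Bl t).r → yN j = 0 by
        have hk := h k.val k.isLt
        rwa [hya k.val k.isLt, Fin.eta] at hk
      cases hL : (Bl t).isLoop with
      | true =>
        apply loop_zero (Bl t).r ((Bl t).hloop hL) aN haN2 yN
        intro j hj
        have heval := hz ((Bl t).v ⟨j, hj⟩)
        rw [key z t ⟨j, hj⟩, eval_pderiv_block_loop _ hL (hblockinj t) z ⟨j, hj⟩] at heval
        rw [haa j hj, hya j hj, hya ((j+1) % (Bl t).r) (Nat.mod_lt _ (Bl t).hr),
            haa ((j + (Bl t).r - 1) % (Bl t).r) (Nat.mod_lt _ (Bl t).hr),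
            hya ((j + (Bl t).r - 1) % (Bl t).r) (Nat.mod_lt _ (Bl t).hr)]
        exact heval
      | false =>
        apply chain_zero (Bl t).r aN haN2 yN
        intro j hj
        have heval := hz ((Bl t).v ⟨j, hj⟩)
        rw [key z t ⟨j, hj⟩, eval_pderiv_block_chain _ hL (hblockinj t) z ⟨j, hj⟩] at heval
        rw [haa j hj, hya j hj]
        rw [show (if j + 1 < (Bl t).r then yN (j+1) else 1) =
            (if h : j + 1 < (Bl t).r then z ((Bl t).v ⟨j+1, h⟩) else 1) from by
          split_ifs with h
          · exact hya _ h
          · rfl]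
        rw [show (if 0 < j then yN (j-1) ^ aN (j-1) else 0) =
            (if _ : 0 < j then z ((Bl t).v ⟨j-1, Nat.lt_of_le_of_lt (Nat.sub_le _ _) hj⟩) ^
              (Bl t).a ⟨j-1, Nat.lt_of_le_of_lt (Nat.sub_le _ _) hj⟩ else 0) from by
          split_ifs with h
          · rw [hya (j-1) (Nat.lt_of_le_of_lt (Nat.sub_le _ _) hj),
              haa (j-1) (Nat.lt_of_le_of_lt (Nat.sub_le _ _) hj)]
          · rfl]
        exact heval
    funext i
    obtain ⟨⟨t, k⟩, rfl⟩ := hsurj i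
    simp only [Pi.zero_apply]
    exact hall t k
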